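/- Let s be a binary sequence of length ℓ starting with 0, having t runs with run lengths lor(s,1),…,lor(s,t). For 1 ≤ i ≤ t and k ≥ 0, let z_{i,k} be the alternating binary sequence of length i starting with 0 followed by k copies of the character 1/2. Then d_DTW(z_{i,k}, s) = k/2 if and only if k ≥ ∑_{j=i+1}^{t} lor(s,j). -/

import Mathlib

/-- `IsExpansion x x'` : `x'` is obtained from `x` by duplicating each character an
arbitrary positive number of times. -/
def IsExpansion (x x' : List ℝ) : Prop :=
  ∃ ks : List ℕ, ks.length = x.length ∧ (∀ k ∈ ks, 0 < k) ∧
    x' = (List.zipWith (fun k (a : ℝ) => List.replicate k a) ks x).flatten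

/-- The dynamic time warping distance with `ℓ₁` character cost `|a - b|`:
the minimum over all pairs of equal-length expansions of the `ℓ₁` distance. -/
noncomputable def dtw (x y : List ℝ) : ℝ :=
  sInf { c | ∃ x' y', IsExpansion x x' ∧ IsExpansion y y' ∧ x'.length = y'.length ∧
    c = (List.zipWith (fun a b => |a - b|) x' y').sum }

/-- The alternating binary sequence of length `i` starting with `0`
(i.e. `0(10)^m` for `i = 2m+1` and `(01)^m` for `i = 2m`). -/
def altSeq (i : ℕ) : List ℝ :=
  List.ofFn (fun j : Fin i => if (j : ℕ) % 2 = 0 then (0 : ℝ) else 1)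



section DTWAux
open List

/-- the value of the `p`-th run -/
def bval (p : ℕ) : ℝ := if p % 2 = 0 then 0 else 1

/-- runs of lengths `A` starting with parity `p` -/
def mkRuns : ℕ → List ℕ → List ℝ
  | _, [] => []
  | p, n :: ns => List.replicate n (bval p) ++ mkRuns (p+1) ns

def altFrom (p n : ℕ) : List ℝ := List.ofFn (fun j : Fin n => bval (p + j))

/-- number of changes of adjacent characters -/
noncomputable def chg : List ℝ → ℕ
  | [] => 0
  | [_] => 0
  | a :: b :: l => (if a = b then 0 else 1) + chg (b :: l)

lemma chg_cons_cons (a b : ℝ) (l : List ℝ) :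
    chg (a :: b :: l) = (if a = b then 0 else 1) + chg (b :: l) := rfl

lemma chg_le_append : ∀ (u v : List ℝ), chg u ≤ chg (u ++ v)
  | [], v => Nat.zero_le _
  | [a], v => Nat.zero_le _
  | a :: b :: u, v => by
    rw [cons_append, cons_append, chg_cons_cons, chg_cons_cons]
    have := chg_le_append (b :: u) v
    rw [cons_append] at this
    omega

lemma chg_replicate_append : ∀ (k : ℕ) (a : ℝ) (l : List ℝ),
    chg (List.replicate (k+1) a ++ l) = chg (a :: l)
  | 0, a, l => rfl
  | k+1, a, l => by
    have : List.replicate (k+1+1) a ++ l = a :: (List.replicate (k+1) a ++ l) := by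
      rw [List.replicate_succ, cons_append]
    rw [this]
    have h2 : List.replicate (k+1) a ++ l = a :: (List.replicate k a ++ l) := by
      rw [List.replicate_succ, cons_append]
    rw [h2, chg_cons_cons, if_pos rfl, ← h2, chg_replicate_append k a l]
    omega

lemma chg_of_chain' : ∀ (l : List ℝ), l.Chain' (· ≠ ·) → chg l = l.length - 1
  | [], _ => rfl
  | [a], _ => rfl
  | a :: b :: l, h => by
    rw [chg_cons_cons, chg_of_chain' (b :: l) h.tail]
    have hab : a ≠ b := List.isChain_cons_cons.mp h |>.1
    simp [hab]
    omega

namespace IsExpansion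

lemma length_le' : ∀ (x : List ℝ) (ks : List ℕ), ks.length = x.length → (∀ k ∈ ks, 0 < k) →
    x.length ≤ ((List.zipWith (fun k (a : ℝ) => List.replicate k a) ks x).flatten).length
  | [], ks, h, _ => by simp
  | a :: x, [], h, _ => by simp at h
  | a :: x, k :: ks, h, hpos => by
    simp only [List.zipWith_cons_cons, List.flatten_cons, List.length_append,
      List.length_replicate, List.length_cons]
    have := length_le' x ks (by simpa using h) (fun m hm => hpos m (List.mem_cons_of_mem _ hm))
    have hk : 0 < k := hpos k (List.mem_cons_self)
    omega

lemma length_le {x x' : List ℝ} (h : IsExpansion x x') : x.length ≤ x'.length := by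
  obtain ⟨ks, h1, h2, rfl⟩ := h
  exact length_le' x ks h1 h2

lemma mem' : ∀ (x : List ℝ) (ks : List ℕ),
    ∀ a ∈ (List.zipWith (fun k (a : ℝ) => List.replicate k a) ks x).flatten, a ∈ x
  | [], ks, a, ha => by simp at ha
  | b :: x, [], a, ha => by simp at ha
  | b :: x, k :: ks, a, ha => by
    simp only [List.zipWith_cons_cons, List.flatten_cons, List.mem_append] at ha
    rcases ha with ha | ha
    · exact (List.eq_of_mem_replicate ha) ▸ List.mem_cons_self
    · exact List.mem_cons_of_mem _ (mem' x ks a ha)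

lemma mem {x x' : List ℝ} (h : IsExpansion x x') {a : ℝ} (ha : a ∈ x') : a ∈ x := by
  obtain ⟨ks, h1, h2, rfl⟩ := h
  exact mem' x ks a ha

lemma head? {x x' : List ℝ} (h : IsExpansion x x') : x'.head? = x.head? := by
  obtain ⟨ks, h1, h2, rfl⟩ := h
  match x, ks with
  | [], [] => rfl
  | [], k :: ks => simp at h1
  | a :: x, [] => simp at h1
  | a :: x, k :: ks =>
    have hk : 0 < k := h2 k (List.mem_cons_self)
    obtain ⟨m, rfl⟩ : ∃ m, k = m + 1 := ⟨k - 1, by omega⟩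
    simp [List.replicate_succ]

protected lemma refl (x : List ℝ) : IsExpansion x x := by
  refine ⟨List.replicate x.length 1, by simp, by simp, ?_⟩
  induction x with
  | nil => rfl
  | cons a x ih => simpa [List.replicate_succ] using ih

lemma append {x₁ x₂ x₁' x₂' : List ℝ} (h1 : IsExpansion x₁ x₁') (h2 : IsExpansion x₂ x₂') :
    IsExpansion (x₁ ++ x₂) (x₁' ++ x₂') := by
  obtain ⟨ks1, hl1, hp1, rfl⟩ := h1
  obtain ⟨ks2, hl2, hp2, rfl⟩ := h2
  refine ⟨ks1 ++ ks2, by simp [hl1, hl2], ?_, ?_⟩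
  · intro k hk; rcases List.mem_append.mp hk with h | h
    · exact hp1 k h
    · exact hp2 k h
  · rw [List.zipWith_append hl1, List.flatten_append]

lemma split {x₁ x₂ x' : List ℝ} (h : IsExpansion (x₁ ++ x₂) x') :
    ∃ x₁' x₂', IsExpansion x₁ x₁' ∧ IsExpansion x₂ x₂' ∧ x' = x₁' ++ x₂' := by
  obtain ⟨ks, hl, hp, rfl⟩ := h
  have hlen : (ks.take x₁.length).length = x₁.length := by
    rw [List.length_take]
    simp only [List.length_append] at hl
    omega
  refine ⟨_, _, ⟨ks.take x₁.length, hlen, fun k hk => hp k (List.mem_of_mem_take hk), rfl⟩,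
    ⟨ks.drop x₁.length, ?_, fun k hk => hp k (List.mem_of_mem_drop hk), rfl⟩, ?_⟩
  · rw [List.length_drop]
    simp only [List.length_append] at hl
    omega
  · conv_lhs => rw [← List.take_append_drop x₁.length ks]
    rw [List.zipWith_append hlen, List.flatten_append]

lemma padLast : ∀ (x : List ℝ) (hx : x ≠ []) (m : ℕ),
    IsExpansion x (x ++ List.replicate m (x.getLast hx))
  | [], hx, m => absurd rfl hx
  | [a], _, m => by
    refine ⟨[m+1], rfl, by simp, ?_⟩
    simp [List.replicate_succ]
  | a :: b :: x, _, m => by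
    obtain ⟨ks, hl, hp, he⟩ := padLast (b :: x) (by simp) m
    refine ⟨1 :: ks, by simpa using hl, ?_, ?_⟩
    · intro k hk; rcases List.mem_cons.mp hk with rfl | h
      · exact Nat.one_pos
      · exact hp k h
    · simp only [List.zipWith_cons_cons, List.flatten_cons, List.replicate_one]
      rw [← he]
      simp [List.getLast_cons]

lemma uniform (x : List ℝ) (m : ℕ) (hm : 0 < m) :
    IsExpansion x ((x.map (List.replicate m)).flatten) := by
  refine ⟨List.replicate x.length m, by simp, by simp [hm], ?_⟩
  induction x with
  | nil => rfl
  | cons a x ih => simpa [List.replicate_succ] using ih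

end IsExpansion

lemma bval_mem (p : ℕ) : bval p = 0 ∨ bval p = 1 := by
  unfold bval; split <;> simp

lemma bval_ne_succ (p : ℕ) : bval p ≠ bval (p+1) := by
  unfold bval
  rcases Nat.even_or_odd p with h | h
  · rw [Nat.even_iff] at h
    have : (p+1) % 2 = 1 := by omega
    simp [h, this]
  · rw [Nat.odd_iff] at h
    have : (p+1) % 2 = 0 := by omega
    simp [h, this]

lemma altFrom_zero (n : ℕ) : altFrom 0 n = altSeq n := by
  unfold altFrom altSeq bval
  simp

lemma altFrom_succ (p n : ℕ) : altFrom p (n+1) = altFrom p n ++ [bval (p+n)] := by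
  unfold altFrom
  rw [List.ofFn_succ']
  simp [List.concat_eq_append, Fin.last]

lemma altSeq_succ (n : ℕ) : altSeq (n+1) = altSeq n ++ [bval n] := by
  rw [← altFrom_zero, ← altFrom_zero, altFrom_succ, Nat.zero_add]

lemma altSeq_mem {n : ℕ} : ∀ a ∈ altSeq n, a = 0 ∨ a = 1 := by
  intro a ha
  rw [← altFrom_zero] at ha
  unfold altFrom at ha
  rw [List.mem_ofFn] at ha
  obtain ⟨j, rfl⟩ := ha
  exact bval_mem _

lemma altFrom_cons (p n : ℕ) : altFrom p (n+1) = bval p :: altFrom (p+1) n := by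
  unfold altFrom
  rw [List.ofFn_succ]
  simp only [Fin.val_zero, Nat.add_zero, Fin.val_succ]
  congr 1
  exact congrArg List.ofFn (funext fun j => by rw [show p + (↑j + 1) = p + 1 + ↑j by omega])

lemma altSeq_chain' (n : ℕ) : (altSeq n).Chain' (· ≠ ·) := by
  rw [← altFrom_zero]
  suffices h : ∀ (n p : ℕ), (altFrom p n).Chain' (· ≠ ·) from h n 0
  intro n
  induction n with
  | zero => intro p; simp [altFrom, List.Chain', List.isChain_nil]
  | succ n ih =>
    intro p
    rw [altFrom_cons]
    cases n with
    | zero => simp [altFrom, List.Chain', List.isChain_singleton]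
    | succ m =>
      rw [altFrom_cons, List.Chain', List.isChain_cons_cons]
      exact ⟨bval_ne_succ p, by rw [← altFrom_cons]; exact ih (p+1)⟩

-- mkRuns lemmas
lemma mkRuns_length : ∀ (p : ℕ) (A : List ℕ), (mkRuns p A).length = A.sum
  | p, [] => rfl
  | p, n :: ns => by
    simp [mkRuns, mkRuns_length (p+1) ns]

lemma mkRuns_mem : ∀ (p : ℕ) (A : List ℕ), ∀ a ∈ mkRuns p A, a = 0 ∨ a = 1
  | p, [], a, ha => by simp [mkRuns] at ha
  | p, n :: ns, a, ha => by
    rcases List.mem_append.mp ha with h | h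
    · exact (List.eq_of_mem_replicate h) ▸ bval_mem p
    · exact mkRuns_mem (p+1) ns a h

lemma mkRuns_append : ∀ (p : ℕ) (A B : List ℕ),
    mkRuns p (A ++ B) = mkRuns p A ++ mkRuns (p + A.length) B
  | p, [], B => by simp [mkRuns]
  | p, n :: ns, B => by
    have h : p + (n :: ns).length = (p + 1) + ns.length := by simp; omega
    show List.replicate n (bval p) ++ mkRuns (p+1) (ns ++ B) = _
    rw [mkRuns_append (p+1) ns B, h]
    simp [mkRuns, List.append_assoc]

lemma mkRuns_head? (p n : ℕ) (ns : List ℕ) (hn : 0 < n) :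
    (mkRuns p (n :: ns)).head? = some (bval p) := by
  obtain ⟨m, rfl⟩ : ∃ m, n = m + 1 := ⟨n - 1, by omega⟩
  simp [mkRuns, List.replicate_succ]

lemma mkRuns_isExpansion : ∀ (p : ℕ) (A : List ℕ), (∀ n ∈ A, 0 < n) →
    IsExpansion (altFrom p A.length) (mkRuns p A)
  | p, [], _ => ⟨[], rfl, by simp, rfl⟩
  | p, n :: ns, hpos => by
    obtain ⟨ks, hl, hp, he⟩ := mkRuns_isExpansion (p+1) ns
      (fun m hm => hpos m (List.mem_cons_of_mem _ hm))
    refine ⟨n :: ks, ?_, ?_, ?_⟩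
    · simp only [List.length_cons, altFrom, List.length_ofFn] at hl ⊢
      omega
    · intro q hq; rcases List.mem_cons.mp hq with rfl | h
      · exact hpos q (List.mem_cons_self)
      · exact hp q h
    · rw [List.length_cons, altFrom_cons, List.zipWith_cons_cons, List.flatten_cons]
      have : altFrom (p+1) ns.length = altFrom (p+1) ks.length := by
        rw [show ks.length = ns.length by simpa [altFrom] using hl]
      rw [mkRuns, ← he]

-- chg of expansion
lemma chg_exp_aux : ∀ (x : List ℝ) (ks : List ℕ) (a : ℝ), ks.length = x.length →
    (∀ k ∈ ks, 0 < k) →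
    chg (a :: (List.zipWith (fun k (a : ℝ) => List.replicate k a) ks x).flatten) = chg (a :: x)
  | [], [], a, _, _ => rfl
  | [], k :: ks, a, h, _ => by simp at h
  | b :: x, [], a, h, _ => by simp at h
  | b :: x, k :: ks, a, h, hpos => by
    have hk : 0 < k := hpos k (List.mem_cons_self)
    obtain ⟨m, rfl⟩ : ∃ m, k = m + 1 := ⟨k - 1, by omega⟩
    simp only [List.zipWith_cons_cons, List.flatten_cons]
    have h1 : List.replicate (m+1) b ++ (List.zipWith (fun k (a : ℝ) => List.replicate k a) ks x).flatten
        = b :: (List.replicate m b ++ (List.zipWith (fun k (a : ℝ) => List.replicate k a) ks x).flatten) := by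
      rw [List.replicate_succ, cons_append]
    rw [h1, chg_cons_cons, ← h1, chg_replicate_append,
      chg_exp_aux x ks b (by simpa using h) (fun q hq => hpos q (List.mem_cons_of_mem _ hq)),
      chg_cons_cons]

lemma IsExpansion.chg_eq {x x' : List ℝ} (h : IsExpansion x x') : chg x' = chg x := by
  obtain ⟨ks, hl, hp, rfl⟩ := h
  match x, ks, hl with
  | [], [], _ => rfl
  | b :: x, k :: ks, hl => ?_
  have hk : 0 < k := hp k (List.mem_cons_self)
  obtain ⟨m, rfl⟩ : ∃ m, k = m + 1 := ⟨k - 1, by omega⟩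
  simp only [List.zipWith_cons_cons, List.flatten_cons]
  rw [chg_replicate_append,
    chg_exp_aux x ks b (by simpa using hl) (fun q hq => hp q (List.mem_cons_of_mem _ hq))]

-- s as mkRuns
lemma flatten_ofFn_eq_mkRuns : ∀ (t : ℕ) (L : Fin t → ℕ) (p : ℕ),
    (List.ofFn (fun j : Fin t => List.replicate (L j) (bval (p + (j : ℕ))))).flatten
      = mkRuns p (List.ofFn L)
  | 0, L, p => by simp [mkRuns]
  | t+1, L, p => by
    rw [List.ofFn_succ, List.ofFn_succ (f := L), List.flatten_cons]
    show _ ++ _ = List.replicate (L 0) (bval p) ++ mkRuns (p+1) (List.ofFn fun j : Fin t => L j.succ)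
    congr 1
    rw [← flatten_ofFn_eq_mkRuns t (fun j => L j.succ) (p+1)]
    congr 1
    exact congrArg List.ofFn (funext fun j => by
      congr 2
      simp [Fin.val_succ]
      omega)

-- sum of drop vs filter
lemma sum_drop_ofFn (t : ℕ) (L : Fin t → ℕ) :
    ∀ i : ℕ, (((List.ofFn L).drop i).sum : ℕ)
      = ∑ j ∈ Finset.univ.filter (fun j : Fin t => i ≤ (j : ℕ)), L j := by
  intro i
  induction i with
  | zero =>
    simp only [List.drop_zero, List.sum_ofFn]
    congr 1
    ext j
    simp
  | succ i ih =>
    by_cases hit : i < t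
    · have hdrop : (List.ofFn L).drop i = L ⟨i, hit⟩ :: (List.ofFn L).drop (i+1) := by
        rw [List.drop_eq_getElem_cons (by simpa using hit)]
        congr 1
        simp
      have hfil : Finset.univ.filter (fun j : Fin t => i ≤ (j : ℕ))
          = insert ⟨i, hit⟩ (Finset.univ.filter (fun j : Fin t => i + 1 ≤ (j : ℕ))) := by
        ext j
        simp only [Finset.mem_filter, Finset.mem_insert, Finset.mem_univ, true_and]
        constructor
        · intro h
          rcases eq_or_lt_of_le h with h' | h'
          · left; exact Fin.ext h'.symm
          · right; omega
        · rintro (rfl | h)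
          · exact le_refl _
          · omega
      have hnotmem : (⟨i, hit⟩ : Fin t) ∉ Finset.univ.filter (fun j : Fin t => i + 1 ≤ (j : ℕ)) := by
        simp
      rw [hfil, Finset.sum_insert hnotmem, hdrop] at ih
      simp only [List.sum_cons] at ih
      omega
    · have h1 : (List.ofFn L).drop (i+1) = [] := by
        apply List.drop_eq_nil_of_le
        simpa using by omega
      have h2 : Finset.univ.filter (fun j : Fin t => i + 1 ≤ (j : ℕ)) = ∅ := by
        ext j
        simp only [Finset.mem_filter, Finset.mem_univ, true_and, Finset.notMem_empty,
          iff_false]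
        omega
      rw [h1, h2]
      simp

-- sum lemmas
lemma sum_zip_abs_nonneg : ∀ (u v : List ℝ),
    0 ≤ (List.zipWith (fun a b => |a - b|) u v).sum
  | [], v => by simp
  | a :: u, [] => by simp
  | a :: u, b :: v => by
    rw [List.zipWith_cons_cons, List.sum_cons]
    have := sum_zip_abs_nonneg u v
    have := abs_nonneg (a - b)
    linarith

lemma sum_zip_self : ∀ (u : List ℝ), (List.zipWith (fun a b => |a - b|) u u).sum = 0
  | [] => by simp
  | a :: u => by
    rw [List.zipWith_cons_cons, List.sum_cons, sum_zip_self u]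
    simp

lemma sum_zip_halves : ∀ (v : List ℝ) (n : ℕ), v.length = n → (∀ b ∈ v, b = 0 ∨ b = 1) →
    (List.zipWith (fun a b => |a - b|) (List.replicate n ((1:ℝ)/2)) v).sum = n / 2
  | [], n, h, _ => by simp [← h]
  | b :: v, n, h, hb => by
    obtain ⟨m, rfl⟩ : ∃ m, n = m + 1 := ⟨v.length, by simp at h; omega⟩
    rw [List.replicate_succ, List.zipWith_cons_cons, List.sum_cons,
      sum_zip_halves v m (by simpa using h) (fun c hc => hb c (List.mem_cons_of_mem _ hc))]
    have h12 : |(1:ℝ)/2 - b| = 1/2 := by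
      rcases hb b (List.mem_cons_self) with rfl | rfl <;> simp [abs_of_nonneg, abs_of_nonpos] <;> norm_num
    rw [h12]
    push_cast
    ring

lemma forall_mem_zipWith {f : ℝ → ℝ → ℝ} {P : ℝ → Prop} :
    ∀ (u v : List ℝ), (∀ a ∈ u, ∀ b ∈ v, P (f a b)) → ∀ x ∈ List.zipWith f u v, P x
  | [], v, _, x, hx => by simp at hx
  | a :: u, [], _, x, hx => by simp at hx
  | a :: u, b :: v, h, x, hx => by
    rw [List.zipWith_cons_cons, List.mem_cons] at hx
    rcases hx with rfl | hx
    · exact h a (List.mem_cons_self) b (List.mem_cons_self)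
    · exact forall_mem_zipWith u v
        (fun a' ha' b' hb' => h a' (List.mem_cons_of_mem _ ha') b' (List.mem_cons_of_mem _ hb'))
        x hx

lemma zip_abs_sum_zero : ∀ (u v : List ℝ), u.length = v.length →
    (List.zipWith (fun a b => |a - b|) u v).sum = 0 → u = v
  | [], [], _, _ => rfl
  | [], b :: v, h, _ => by simp at h
  | a :: u, [], h, _ => by simp at h
  | a :: u, b :: v, h, hsum => by
    rw [List.zipWith_cons_cons, List.sum_cons] at hsum
    have h1 := sum_zip_abs_nonneg u v
    have h2 := abs_nonneg (a - b)
    have hab : a = b := by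
      have : |a - b| = 0 := by linarith
      have := abs_eq_zero.mp this
      linarith
    rw [hab, zip_abs_sum_zero u v (by simpa using h) (by linarith)]

lemma binary_sum : ∀ (l : List ℝ), (∀ x ∈ l, x = 0 ∨ x = 1) → l.sum = 0 ∨ 1 ≤ l.sum
  | [], _ => Or.inl (by simp)
  | a :: l, h => by
    have hnn : (0:ℝ) ≤ l.sum :=
      List.sum_nonneg (fun x hx => by
        rcases h x (List.mem_cons_of_mem _ hx) with rfl | rfl <;> norm_num)
    rcases h a (List.mem_cons_self) with rfl | rfl
    · rcases binary_sum l (fun x hx => h x (List.mem_cons_of_mem _ hx)) with h0 | h1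
      · left; simp [h0]
      · right; rw [List.sum_cons]; linarith
    · right; rw [List.sum_cons]; linarith

end DTWAux

open List in
/-- Let `s` be a binary sequence starting with `0` having `t` runs of
lengths `L 0, …, L (t-1)` (so the `j`-th run, 0-indexed, consists of `L j` copies of `0`
if `j` is even and of `1` if `j` is odd).  For `1 ≤ i ≤ t` and `k ≥ 0`, with
`z = altSeq i ++ (1/2)^k`, we have `d_DTW(z, s) = k/2` iff
`k ≥ ∑_{j=i}^{t-1} L j` (the total length of runs `i+1,…,t` in 1-indexed terms). -/
theorem dtw_altseq_halves_query_iff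
    (t : ℕ) (ht : 1 ≤ t) (L : Fin t → ℕ) (hL : ∀ j, 0 < L j)
    (s : List ℝ)
    (hs : s = (List.ofFn (fun j : Fin t =>
      List.replicate (L j) (if (j : ℕ) % 2 = 0 then (0 : ℝ) else 1))).flatten)
    (i k : ℕ) (hi1 : 1 ≤ i) (hit : i ≤ t) :
    dtw (altSeq i ++ List.replicate k ((1 : ℝ) / 2)) s = k / 2 ↔
      (∑ j ∈ Finset.univ.filter (fun j : Fin t => i ≤ (j : ℕ)), L j) ≤ k := by
  classical
  set z : List ℝ := altSeq i ++ List.replicate k ((1:ℝ)/2) with hzdef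
  set S : Set ℝ := { c | ∃ x' y', IsExpansion z x' ∧ IsExpansion s y' ∧ x'.length = y'.length ∧
    c = (List.zipWith (fun a b => |a - b|) x' y').sum } with hSdef
  have hdtwS : dtw z s = sInf S := rfl
  have hsmk : s = mkRuns 0 (List.ofFn L) := by
    rw [hs, show (fun j : Fin t => List.replicate (L j) (if (j:ℕ) % 2 = 0 then (0:ℝ) else 1))
        = fun j : Fin t => List.replicate (L j) (bval (0 + (j : ℕ))) from
      funext fun j => by simp [bval], flatten_ofFn_eq_mkRuns]
  set A := (List.ofFn L).take i with hA
  set B := (List.ofFn L).drop i with hB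
  have hAlen : A.length = i := by
    rw [hA, List.length_take]
    simp only [List.length_ofFn]
    omega
  have hApos : ∀ n ∈ A, 0 < n := by
    intro n hn
    have h1 := List.mem_of_mem_take hn
    rw [List.mem_ofFn] at h1
    obtain ⟨j, rfl⟩ := h1
    exact hL j
  have hBpos : ∀ n ∈ B, 0 < n := by
    intro n hn
    have h1 := List.mem_of_mem_drop hn
    rw [List.mem_ofFn] at h1
    obtain ⟨j, rfl⟩ := h1
    exact hL j
  have hsplit : s = mkRuns 0 A ++ mkRuns i B := by
    rw [hsmk, ← List.take_append_drop i (List.ofFn L), ← hA, ← hB, mkRuns_append, hAlen,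
      Nat.zero_add]
  set s1 := mkRuns 0 A with hs1
  set s2 := mkRuns i B with hs2
  have hs1len : s1.length = A.sum := mkRuns_length 0 A
  have hs2len : s2.length = B.sum := mkRuns_length i B
  have hs1exp : IsExpansion (altSeq i) s1 := by
    have h := mkRuns_isExpansion 0 A hApos
    rwa [hAlen, altFrom_zero] at h
  have hsbin : ∀ a ∈ s, a = 0 ∨ a = 1 := by
    intro a ha
    rw [hsplit] at ha
    rcases List.mem_append.mp ha with h | h
    · exact mkRuns_mem 0 A a h
    · exact mkRuns_mem i B a h
  have hAne : A ≠ [] := by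
    intro h
    rw [h] at hAlen
    simp at hAlen
    omega
  have hAsum : 0 < A.sum := by
    obtain ⟨n, ns, hcons⟩ := List.exists_cons_of_ne_nil hAne
    have hn : 0 < n := hApos n (by rw [hcons]; exact List.mem_cons_self)
    rw [hcons, List.sum_cons]
    omega
  have hslen : s.length = A.sum + B.sum := by
    rw [hsplit, List.length_append, hs1len, hs2len]
  have hsne : s ≠ [] := by
    apply List.ne_nil_of_length_pos
    omega
  have hTsum : (∑ j ∈ Finset.univ.filter (fun j : Fin t => i ≤ (j : ℕ)), L j) = B.sum := by
    rw [hB]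
    exact (sum_drop_ofFn t L i).symm
  rw [hdtwS, hTsum]
  -- nonemptiness of S
  have lenflat : ∀ (x : List ℝ) (m : ℕ), ((x.map (List.replicate m)).flatten).length
      = x.length * m := by
    intro x m
    induction x with
    | nil => simp
    | cons a x ih =>
      simp only [List.map_cons, List.flatten_cons, List.length_append, List.length_replicate,
        List.length_cons, ih]
      ring
  have hzlen : z.length = i + k := by
    rw [hzdef]
    simp [altSeq]
  have hSne : S.Nonempty := by
    refine ⟨_, (z.map (List.replicate s.length)).flatten, (s.map (List.replicate z.length)).flatten,
      IsExpansion.uniform z s.length (by omega),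
      IsExpansion.uniform s z.length (by omega), ?_, rfl⟩
    rw [lenflat, lenflat]
    exact Nat.mul_comm _ _
  -- key analysis of arbitrary members of S
  have key : ∀ c ∈ S, (k:ℝ)/2 ≤ c ∧ (k < B.sum → (k:ℝ)/2 + 1/2 ≤ c) := by
    intro c hc
    rw [hSdef] at hc
    obtain ⟨x', y', hx, hy, hlen, rfl⟩ := hc
    rw [hzdef] at hx
    obtain ⟨w, h', hw, hh, hx'eq⟩ := IsExpansion.split hx
    subst hx'eq
    have hhrep : h' = List.replicate h'.length ((1:ℝ)/2) := by
      rw [List.eq_replicate_length]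
      intro b hb
      exact List.eq_of_mem_replicate (hh.mem hb)
    have hk' : k ≤ h'.length := by simpa using hh.length_le
    have hwle : w.length ≤ y'.length := by
      rw [← hlen, List.length_append]
      omega
    have hytlen : (y'.take w.length).length = w.length := by
      rw [List.length_take]
      omega
    have hydlen : (y'.drop w.length).length = h'.length := by
      rw [List.length_drop, ← hlen, List.length_append]
      omega
    have hcsplit : (List.zipWith (fun a b => |a - b|) (w ++ h') y').sum
        = (List.zipWith (fun a b => |a - b|) w (y'.take w.length)).sum
          + (List.zipWith (fun a b => |a - b|) h' (y'.drop w.length)).sum := by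
      conv_lhs => rw [← List.take_append_drop w.length y']
      rw [List.zipWith_append hytlen.symm, List.sum_append]
    have hB2 : (List.zipWith (fun a b => |a - b|) h' (y'.drop w.length)).sum
        = (h'.length : ℝ)/2 := by
      conv_lhs => rw [hhrep]
      exact sum_zip_halves _ _ hydlen (fun b hb => hsbin b (hy.mem (List.mem_of_mem_drop hb)))
    have hA2 : 0 ≤ (List.zipWith (fun a b => |a - b|) w (y'.take w.length)).sum :=
      sum_zip_abs_nonneg _ _
    have hkr : (k:ℝ) ≤ (h'.length : ℝ) := by exact_mod_cast hk'
    refine ⟨by rw [hcsplit, hB2]; linarith, ?_⟩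
    intro hkB
    by_cases hk1 : k + 1 ≤ h'.length
    · have : (k:ℝ) + 1 ≤ (h'.length : ℝ) := by exact_mod_cast hk1
      rw [hcsplit, hB2]
      linarith
    · have hhl : h'.length = k := by omega
      have hterms : ∀ x ∈ List.zipWith (fun a b => |a - b|) w (y'.take w.length),
          x = 0 ∨ x = 1 := by
        apply forall_mem_zipWith
        intro a ha b hb
        have ha' := altSeq_mem a (hw.mem ha)
        have hb' := hsbin b (hy.mem (List.mem_of_mem_take hb))
        rcases ha' with rfl | rfl <;> rcases hb' with rfl | rfl <;> norm_num
      rcases binary_sum _ hterms with h0 | h1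
      · exfalso
        have hweq : w = y'.take w.length := by
          apply zip_abs_sum_zero _ _ hytlen.symm h0
        have hy'' : IsExpansion (s1 ++ s2) y' := by rw [← hsplit]; exact hy
        obtain ⟨y1, y2, hy1e, hy2e, hy'eq⟩ := IsExpansion.split hy''
        have hy2len : s2.length ≤ y2.length := hy2e.length_le
        have hlens : w.length + k = y1.length + y2.length := by
          have h2 : (w ++ h').length = y'.length := hlen
          rw [hy'eq] at h2
          simp only [List.length_append] at h2
          omega
        have hwlong : y1.length + 1 ≤ w.length := by
          rw [hs2len] at hy2len
          omega
        have hy2ne : y2 ≠ [] := by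
          apply List.ne_nil_of_length_pos
          omega
        have hBne : B ≠ [] := by
          intro hBn
          rw [hBn] at hkB
          simp at hkB
        obtain ⟨n, ns, hBcons⟩ := List.exists_cons_of_ne_nil hBne
        have hy2h : y2.head? = some (bval i) := by
          rw [hy2e.head?, hs2, hBcons,
            mkRuns_head? i n ns (hBpos n (by rw [hBcons]; exact List.mem_cons_self))]
        obtain ⟨c0, y2t, hy2cons⟩ := List.exists_cons_of_ne_nil hy2ne
        have hc0 : c0 = bval i := by
          rw [hy2cons] at hy2h
          simpa using hy2h
        have htake : w.take (y1.length + 1) = y1 ++ [bval i] := by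
          calc w.take (y1.length + 1) = (y'.take w.length).take (y1.length + 1) := by
                rw [← hweq]
            _ = y'.take (y1.length + 1) := by
                rw [List.take_take]
                congr 1
                omega
            _ = y1 ++ y2.take 1 := by rw [hy'eq, List.take_append, List.take_of_length_le (by omega), Nat.add_sub_cancel_left]
            _ = y1 ++ [bval i] := by rw [hy2cons, hc0]; rfl
        have hchg1 : chg (y1 ++ [bval i]) = i := by
          have e1 : IsExpansion (altSeq i ++ [bval i]) (s1 ++ [bval i]) :=
            hs1exp.append (IsExpansion.refl _)
          have e2 : IsExpansion (s1 ++ [bval i]) (y1 ++ [bval i]) :=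
            hy1e.append (IsExpansion.refl _)
          rw [e2.chg_eq, e1.chg_eq, ← altSeq_succ, chg_of_chain' _ (altSeq_chain' _)]
          simp [altSeq]
        have hchg2 : chg w = i - 1 := by
          rw [hw.chg_eq, chg_of_chain' _ (altSeq_chain' _)]
          simp [altSeq]
        have hchg3 : chg (w.take (y1.length + 1)) ≤ chg w := by
          conv_rhs => rw [← List.take_append_drop (y1.length + 1) w]
          exact chg_le_append _ _
        rw [htake, hchg1, hchg2] at hchg3
        omega
      · rw [hcsplit, hB2, hhl]
        linarith
  -- membership construction
  have hmem : B.sum ≤ k → (k:ℝ)/2 ∈ S := by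
    intro hTk
    rw [hSdef]
    obtain ⟨gc, hgc⟩ : ∃ gc : ℝ, gc = s.getLast hsne := ⟨_, rfl⟩
    have hgcbin : gc = 0 ∨ gc = 1 := by
      rw [hgc]
      exact hsbin _ (List.getLast_mem hsne)
    refine ⟨s1 ++ List.replicate k ((1:ℝ)/2),
      s ++ List.replicate (k - B.sum) gc, ?_, ?_, ?_, ?_⟩
    · rw [hzdef]
      exact hs1exp.append (IsExpansion.refl _)
    · rw [hgc]
      exact IsExpansion.padLast s hsne _
    · simp only [List.length_append, List.length_replicate, hs1len, hslen]
      omega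
    · have hre : s ++ List.replicate (k - B.sum) gc
          = s1 ++ (s2 ++ List.replicate (k - B.sum) gc) := by
        conv_lhs => rw [hsplit]
        rw [List.append_assoc]
      rw [hre, List.zipWith_append rfl, List.sum_append, sum_zip_self,
        sum_zip_halves (s2 ++ List.replicate (k - B.sum) gc) k
          (by simp only [List.length_append, List.length_replicate, hs2len]; omega)
          ?_]
      · norm_num
      · intro b hb
        rcases List.mem_append.mp hb with h | h
        · exact mkRuns_mem i B b h
        · rw [List.eq_of_mem_replicate h]
          exact hgcbin
  constructor
  · intro hdtw
    by_contra hTk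
    push_neg at hTk
    have hge : (k:ℝ)/2 + 1/2 ≤ sInf S := le_csInf hSne (fun c hc => (key c hc).2 hTk)
    rw [hdtw] at hge
    linarith
  · intro hTk
    have hmem' := hmem hTk
    exact le_antisymm (csInf_le ⟨(k:ℝ)/2, fun c hc => (key c hc).1⟩ hmem')
      (le_csInf ⟨_, hmem'⟩ (fun c hc => (key c hc).1))
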